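/- arXiv:1802.09776 — 3 statements merged into one kernel-verified Lean document; each statement's English description precedes it below -/
import Mathlib

section
/- Let X be a countable Markov shift over a countably infinite alphabet, φ: X → ℝ a measurable function, and assume there exists a Gibbs state for the potential φ. Then sup φ < ∞, inf φ = -∞, and sup_{n≥1} D_n(φ) < ∞, where D_n(φ) = sup_{w∈E^n} sup_{x,y∈[w]} (S_nφ(x) - S_nφ(y)). -/
open MeasureTheory Filter Topology Set
open scoped ENNReal NNReal

namespace CMS

/-! ### Generic dynamical notions -/

variable {X : Type*}

/-- Birkhoff sum `S_n φ`. -/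
noncomputable def birkhoff (T : X → X) (φ : X → ℝ) (n : ℕ) (x : X) : ℝ :=
  ∑ i ∈ Finset.range n, φ (T^[i] x)

/-- A measure is invariant under `T`. -/
def Invariant [MeasurableSpace X] (T : X → X) (μ : Measure X) : Prop :=
  Measure.map T μ = μ

/-- `∫ φ dμ > -∞`, i.e. the negative part of `φ` is integrable. -/
def IntegralGtBot [MeasurableSpace X] (φ : X → ℝ) (μ : Measure X) : Prop :=
  (∫⁻ x, ENNReal.ofReal (-φ x) ∂μ) ≠ ⊤

/-- The integral of `φ`, with values in `EReal` (defined whenever one of the parts is finite). -/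
noncomputable def eintegral [MeasurableSpace X] (φ : X → ℝ) (μ : Measure X) : EReal :=
  ((∫⁻ x, ENNReal.ofReal (φ x) ∂μ : ℝ≥0∞) : EReal) -
    ((∫⁻ x, ENNReal.ofReal (-φ x) ∂μ : ℝ≥0∞) : EReal)

/-- Entropy of the countable partition induced by a map `g` with countable range. -/
noncomputable def partitionEntropy [MeasurableSpace X] {α : Type*} (μ : Measure X) (g : X → α) :
    ℝ≥0∞ :=
  ∑' a : α, ENNReal.ofReal (-((μ (g ⁻¹' {a})).toReal * Real.log ((μ (g ⁻¹' {a})).toReal)))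

/-- Kolmogorov–Sinaĭ entropy of `T` with respect to `μ`: the supremum over finite measurable
partitions (coded by maps `X → ℕ` with finite range) of the asymptotic entropy of iterated
joins of the partition. -/
noncomputable def entropy [MeasurableSpace X] (T : X → X) (μ : Measure X) : ℝ≥0∞ :=
  ⨆ (p : X → ℕ) (_ : Measurable p ∧ (Set.range p).Finite),
    atTop.liminf fun n : ℕ =>
      ENNReal.ofReal ((n : ℝ)⁻¹) * partitionEntropy μ (fun x => fun i : Fin n => p (T^[i] x))

/-- The empirical measure `δ_x^n = (1/n) ∑_{i<n} δ_{T^i x}` (with junk convention `n = 0 ↦ n = 1`,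
irrelevant since only `n ≥ 1` is ever used). -/
noncomputable def empirical [MeasurableSpace X] (T : X → X) (x : X) (n : ℕ) :
    ProbabilityMeasure X :=
  ⟨((max n 1 : ℕ) : ℝ≥0∞)⁻¹ • ∑ i ∈ Finset.range (max n 1), Measure.dirac (T^[i] x), by
    refine ⟨?_⟩
    have h1 : (∑ i ∈ Finset.range (max n 1), Measure.dirac (T^[i] x)) Set.univ
        = ((max n 1 : ℕ) : ℝ≥0∞) := by
      rw [Measure.finset_sum_apply]
      simp
    rw [Measure.smul_apply, h1, smul_eq_mul, ENNReal.inv_mul_cancel] <;> simp⟩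

noncomputable instance [MeasurableSpace X] [TopologicalSpace X] [OpensMeasurableSpace X] :
    MeasurableSpace (ProbabilityMeasure X) := borel _

/-- Sets of periodic points. -/
def perSet (T : X → X) (n : ℕ) : Set X := {x | T^[n] x = x}

/-- Sets of iterated preimages of a point. -/
def preimSet (T : X → X) (n : ℕ) (y : X) : Set X := {x | T^[n] x = y}

/-- The partition function `Z_n(φ, C)` over a subset `C`. -/
noncomputable def Zfn [MeasurableSpace X] (T : X → X) (φ : X → ℝ) (n : ℕ) (C : Set X) : ℝ≥0∞ :=
  ∑' x : C, ENNReal.ofReal (Real.exp (birkhoff T φ n x))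

/-- The distribution of the empirical measures under `μ`. -/
noncomputable def empDistr [MeasurableSpace X] [TopologicalSpace X] [OpensMeasurableSpace X]
    (T : X → X) (μ : Measure X) (n : ℕ) : Measure (ProbabilityMeasure X) :=
  Measure.map (fun x => empirical T x n) μ

/-- The distribution `Z_n(φ,C)⁻¹ ∑_{x ∈ C} e^{S_nφ(x)} δ_{δ_x^n}` on the space of probability
measures, for a countable set `C` (of weighted periodic points or iterated preimages). -/
noncomputable def weightedDistr [MeasurableSpace X] [TopologicalSpace X] [OpensMeasurableSpace X]
    (T : X → X) (φ : X → ℝ) (n : ℕ) (C : Set X) : Measure (ProbabilityMeasure X) :=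
  (Zfn T φ n C)⁻¹ •
    Measure.sum (fun x : C =>
      ENNReal.ofReal (Real.exp (birkhoff T φ n x)) • Measure.dirac (empirical T (x : X) n))

/-! ### Large deviations notions -/

variable {Y : Type*}

/-- The large deviation principle for a sequence of (sub)probability measures with rate
function `J`. -/
def HasLDP [TopologicalSpace Y] [MeasurableSpace Y] (μ : ℕ → Measure Y) (J : Y → EReal) : Prop :=
  (∀ G : Set Y, IsOpen G →
      -(⨅ y ∈ G, J y) ≤
        atTop.liminf fun n : ℕ => (((n : ℝ)⁻¹ : ℝ) : EReal) * ENNReal.log (μ n G)) ∧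
  (∀ K : Set Y, IsClosed K →
      atTop.limsup (fun n : ℕ => (((n : ℝ)⁻¹ : ℝ) : EReal) * ENNReal.log (μ n K)) ≤
        -(⨅ y ∈ K, J y))

/-- Exponential tightness of a sequence of measures. -/
def ExpTight [TopologicalSpace Y] [MeasurableSpace Y] (μ : ℕ → Measure Y) : Prop :=
  ∀ L : ℝ, 0 < L → ∃ K : Set Y, IsCompact K ∧
    atTop.limsup (fun n : ℕ => (((n : ℝ)⁻¹ : ℝ) : EReal) * ENNReal.log (μ n Kᶜ)) ≤ ((-L : ℝ) : EReal)

/-- A good rate function: lower semicontinuous with compact sublevel sets. -/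
def GoodRate [TopologicalSpace Y] (J : Y → EReal) : Prop :=
  LowerSemicontinuous J ∧ ∀ α : ℝ, 0 ≤ α → IsCompact {y | J y ≤ (α : EReal)}

/-- The rate function `I(μ) = - inf_{G ∋ μ} sup_G F`. -/
noncomputable def rateOf [TopologicalSpace Y] (F : Y → EReal) (μ : Y) : EReal :=
  -(⨅ (G : Set Y) (_ : IsOpen G ∧ μ ∈ G), ⨆ ν ∈ G, F ν)

/-- The convex combination `t μ + (1-t) ν` of two probability measures. -/
noncomputable def mix [MeasurableSpace X] (t : ℝ) (h0 : 0 ≤ t) (h1 : t ≤ 1)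
    (μ ν : ProbabilityMeasure X) : ProbabilityMeasure X :=
  ⟨ENNReal.ofReal t • (μ : Measure X) + ENNReal.ofReal (1 - t) • (ν : Measure X), by
    refine ⟨?_⟩
    simp only [Measure.add_apply, Measure.smul_apply, smul_eq_mul, measure_univ, mul_one]
    rw [← ENNReal.ofReal_add h0 (by linarith)]
    norm_num⟩

/-- Convexity of a rate function on probability measures. -/
def ConvexRate [MeasurableSpace X] (J : ProbabilityMeasure X → EReal) : Prop :=
  ∀ μ ν : ProbabilityMeasure X, ∀ t : ℝ, ∀ (h0 : 0 ≤ t) (h1 : t ≤ 1),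
    J (mix t h0 h1 μ ν) ≤ ((t : ℝ) : EReal) * J μ + ((1 - t : ℝ) : EReal) * J ν

-- The free energy functional `F`.
open Classical in
noncomputable def freeEnergy [MeasurableSpace X] (T : X → X) (φ : X → ℝ) (P : ℝ)
    (ν : ProbabilityMeasure X) : EReal :=
  if Invariant T (ν : Measure X) ∧ IntegralGtBot φ (ν : Measure X)
  then ((entropy T (ν : Measure X) : ℝ≥0∞) : EReal) + eintegral φ (ν : Measure X) - ((P : ℝ) : EReal)
  else ⊥

/-! ### Countable Markov shifts -/

variable {S : Type*}

/-- The topological Markov shift with alphabet `S` and transition relation `A`. -/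
def Space (A : S → S → Prop) : Type _ := {x : ℕ → S // ∀ i, A (x i) (x (i + 1))}

variable (A : S → S → Prop)

instance [TopologicalSpace S] : TopologicalSpace (Space A) :=
  inferInstanceAs (TopologicalSpace {x : ℕ → S // ∀ i, A (x i) (x (i + 1))})

noncomputable instance [TopologicalSpace S] : MeasurableSpace (Space A) := borel _

instance [TopologicalSpace S] : BorelSpace (Space A) := ⟨rfl⟩

/-- The left shift. -/
def shift : Space A → Space A := fun x => ⟨fun i => x.1 (i + 1), fun i => x.2 (i + 1)⟩

/-- Admissible words. -/
def Admissible (w : List S) : Prop := w ≠ [] ∧ w.Chain' A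

/-- The cylinder set of a word. -/
def cylinder (w : List S) : Set (Space A) := {x | ∀ i : Fin w.length, x.1 i = w.get i}

variable {A}

/-- The initial word of length `n` of a point. -/
def word (x : Space A) (n : ℕ) : List S := List.ofFn (fun i : Fin n => x.1 i)

variable (A)

/-- `μ` is a Gibbs state for the potential `φ` with constants `c₀` and `P`. -/
def IsGibbsWith [TopologicalSpace S] (φ : Space A → ℝ) (μ : Measure (Space A)) (c₀ P : ℝ) :
    Prop :=
  ∀ n : ℕ, 1 ≤ n → ∀ x : Space A,
    c₀⁻¹ * Real.exp (-(P * n) + birkhoff (shift A) φ n x)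
        ≤ (μ (cylinder A (word x n))).toReal ∧
      (μ (cylinder A (word x n))).toReal
        ≤ c₀ * Real.exp (-(P * n) + birkhoff (shift A) φ n x)

/-- `μ` is a Gibbs state for `φ`. -/
def IsGibbs [TopologicalSpace S] (φ : Space A → ℝ) (μ : Measure (Space A)) : Prop :=
  ∃ c₀ P : ℝ, 1 ≤ c₀ ∧ IsGibbsWith A φ μ c₀ P

/-- The transition matrix has no row or column identically zero. -/
def NoZeroRowCol : Prop := (∀ a : S, ∃ b, A a b) ∧ ∀ b : S, ∃ a, A a b

/-- Finite irreducibility. -/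
def FinitelyIrreducible : Prop :=
  ∃ Λ : Finset (List S), ∀ v w : List S, Admissible A v → Admissible A w →
    ∃ l ∈ Λ, Admissible A (v ++ l ++ w)

/-- Finite primitiveness. -/
def FinitelyPrimitive : Prop :=
  ∃ Λ : Finset (List S), (∃ N : ℕ, ∀ l ∈ Λ, l.length = N) ∧
    ∀ v w : List S, Admissible A v → Admissible A w →
      ∃ l ∈ Λ, Admissible A (v ++ l ++ w)

/-- Topological transitivity. -/
def TopTransitive : Prop :=
  ∀ a b : S, ∃ n : ℕ, 1 ≤ n ∧
    (cylinder A [a] ∩ (shift A)^[n] ⁻¹' (cylinder A [b])).Nonempty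

/-- Varadhan's functional `Q(ψ) = sup_μ (∫ψ dμ - I(μ))`. -/
noncomputable def varQ {X : Type*} [MeasurableSpace X] (I : ProbabilityMeasure X → EReal)
    (ψ : X → ℝ) : EReal :=
  ⨆ μ : ProbabilityMeasure X, (((∫ x, ψ x ∂(μ : Measure X)) : ℝ) : EReal) - I μ

/-- `φ` is uniformly continuous for the standard metric of the shift space. -/
def UnifCont (φ : Space A → ℝ) : Prop :=
  ∀ ε : ℝ, 0 < ε → ∃ N : ℕ, ∀ x y : Space A, (∀ i < N, x.1 i = y.1 i) → |φ x - φ y| ≤ ε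

/-- `φ` is bounded. -/
def Bdd (φ : Space A → ℝ) : Prop := ∃ C : ℝ, ∀ x : Space A, |φ x| ≤ C

end CMS


section Aux

open CMS

variable {S : Type*} [TopologicalSpace S] [DiscreteTopology S] {A : S → S → Prop}

lemma cyl1_eq (a : S) :
    CMS.cylinder A [a] = (fun x : Space A => x.1 0) ⁻¹' {a} := by
  ext x
  constructor
  · intro h
    simpa using h ⟨0, by simp⟩
  · intro h i
    fin_cases i
    simpa using h

lemma cyl1_measurable (a : S) : MeasurableSet (CMS.cylinder A [a]) := by
  have hcont : Continuous (fun x : Space A => x.1 0) :=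
    (continuous_apply 0).comp continuous_subtype_val
  rw [cyl1_eq]
  exact ((isOpen_discrete ({a} : Set S)).preimage hcont).measurableSet

omit [TopologicalSpace S] [DiscreteTopology S] in
lemma word_eq_of_mem_cylinder {w : List S} {n : ℕ} (hlen : w.length = n)
    {x : Space A} (hx : x ∈ CMS.cylinder A w) : word x n = w := by
  apply List.ext_getElem
  · simp [word, hlen]
  · intro i h1 h2
    have hi : i < n := by simpa [word] using h1
    have := hx ⟨i, by omega⟩
    simp only [word, List.getElem_ofFn]
    simpa using this

end Aux

open CMS in
/-- If a countable Markov shift over an infinite alphabet admits a Gibbs state for a measurable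
potential `φ`, then `sup φ < ∞`, `inf φ = -∞`, and `sup_{n ≥ 1} D_n(φ) < ∞`. -/
theorem gibbs_potential_properties {S : Type*} [Countable S] [Infinite S] [TopologicalSpace S]
    [DiscreteTopology S]
    (A : S → S → Prop) (hA : NoZeroRowCol A)
    (φ : Space A → ℝ) (hφ : Measurable φ)
    (hex : ∃ μ : Measure (Space A), IsProbabilityMeasure μ ∧ IsGibbs A φ μ) :
    (∃ C : ℝ, ∀ x : Space A, φ x ≤ C) ∧
    (∀ C : ℝ, ∃ x : Space A, φ x < C) ∧
    ∃ C : ℝ, ∀ n : ℕ, 1 ≤ n → ∀ w : List S, Admissible A w → w.length = n →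
      ∀ x ∈ cylinder A w, ∀ y ∈ cylinder A w,
        birkhoff (shift A) φ n x - birkhoff (shift A) φ n y ≤ C := by
  obtain ⟨μ, hμprob, c₀, P, hc₀, hgibbs⟩ := hex
  have hc₀pos : (0:ℝ) < c₀ := by linarith
  have hb1 : ∀ x : Space A, birkhoff (shift A) φ 1 x = φ x := by
    intro x; simp [birkhoff]
  -- upper bound on φ
  have hub : ∀ x : Space A, φ x ≤ Real.log c₀ + P := by
    intro x
    obtain ⟨hlo, -⟩ := hgibbs 1 le_rfl x
    simp only [Nat.cast_one] at hlo
    have h1 : (μ (cylinder A (word x 1))).toReal ≤ 1 := by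
      have h := prob_le_one (μ := μ) (s := cylinder A (word x 1))
      calc (μ (cylinder A (word x 1))).toReal
          ≤ (1 : ℝ≥0∞).toReal := ENNReal.toReal_mono ENNReal.one_ne_top h
        _ = 1 := by simp
    have h2 : c₀⁻¹ * Real.exp (-(P*1) + birkhoff (shift A) φ 1 x) ≤ 1 := hlo.trans h1
    have h3 := Real.log_le_log (by positivity) h2
    rw [Real.log_mul (by positivity) (Real.exp_ne_zero _), Real.log_exp, Real.log_inv,
      Real.log_one, hb1] at h3
    linarith
  refine ⟨⟨Real.log c₀ + P, hub⟩, ?_, ?_⟩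
  · -- φ is unbounded below
    intro C
    by_contra hcon
    push_neg at hcon
    obtain ⟨f, hf⟩ := Classical.axiomOfChoice hA.1
    set pt : S → Space A := fun a =>
      ⟨fun i => f^[i] a, fun i => by
        show A (f^[i] a) (f^[i+1] a)
        rw [Function.iterate_succ_apply']; exact hf _⟩ with hpt
    have hpt0 : ∀ a, (pt a).1 0 = a := fun a => rfl
    have hword : ∀ a : S, word (pt a) 1 = [a] := by
      intro a
      simp [word, List.ofFn_succ, hpt0]
    set δ : ℝ := c₀⁻¹ * Real.exp (-(P*1) + C) with hδ
    have hδpos : 0 < δ := by positivity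
    have hlow : ∀ a : S, δ ≤ (μ (cylinder A [a])).toReal := by
      intro a
      obtain ⟨hlo, -⟩ := hgibbs 1 le_rfl (pt a)
      rw [hword a] at hlo
      simp only [Nat.cast_one, hb1] at hlo
      refine le_trans ?_ hlo
      rw [hδ]
      exact mul_le_mul_of_nonneg_left
        (Real.exp_le_exp.mpr (by linarith [hcon (pt a)]))
        (inv_nonneg.mpr hc₀pos.le)
    obtain ⟨N, hN⟩ := exists_nat_gt (1/δ)
    set g : ℕ → S := fun k => (Infinite.natEmbedding S) k with hg
    have hginj : Function.Injective g := (Infinite.natEmbedding S).injective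
    have hdisj : (↑(Finset.range N) : Set ℕ).PairwiseDisjoint
        (fun k => cylinder A [g k]) := by
      intro i _ j _ hij
      refine Set.disjoint_left.mpr ?_
      intro x hxi hxj
      simp only [cyl1_eq, Set.mem_preimage, Set.mem_singleton_iff] at hxi hxj
      exact hij (hginj (hxi ▸ hxj))
    have hsum : ∑ k ∈ Finset.range N, μ (cylinder A [g k])
        = μ (⋃ k ∈ Finset.range N, cylinder A [g k]) :=
      (measure_biUnion_finset hdisj (fun k _ => cyl1_measurable (g k))).symm
    have hle1 : μ (⋃ k ∈ Finset.range N, cylinder A [g k]) ≤ 1 := prob_le_one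
    have hfin : ∀ k ∈ Finset.range N, μ (cylinder A [g k]) ≠ ⊤ :=
      fun k _ => measure_ne_top μ _
    have hreal : ∑ k ∈ Finset.range N, (μ (cylinder A [g k])).toReal ≤ 1 := by
      rw [← ENNReal.toReal_sum hfin, hsum]
      calc (μ _).toReal ≤ (1 : ℝ≥0∞).toReal := ENNReal.toReal_mono ENNReal.one_ne_top hle1
        _ = 1 := by simp
    have hNδ : (N : ℝ) * δ ≤ 1 := by
      calc (N : ℝ) * δ = ∑ _k ∈ Finset.range N, δ := by
            simp [mul_comm]
        _ ≤ ∑ k ∈ Finset.range N, (μ (cylinder A [g k])).toReal :=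
            Finset.sum_le_sum (fun k _ => hlow (g k))
        _ ≤ 1 := hreal
    rw [div_lt_iff₀ hδpos] at hN
    linarith
  · -- bounded distortion
    refine ⟨2 * Real.log c₀, ?_⟩
    intro n hn w hadm hlen x hx y hy
    have hwx := word_eq_of_mem_cylinder hlen hx
    have hwy := word_eq_of_mem_cylinder hlen hy
    obtain ⟨hlox, -⟩ := hgibbs n hn x
    obtain ⟨-, hhiy⟩ := hgibbs n hn y
    rw [hwx] at hlox
    rw [hwy] at hhiy
    have key : c₀⁻¹ * Real.exp (-(P*n) + birkhoff (shift A) φ n x)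
        ≤ c₀ * Real.exp (-(P*n) + birkhoff (shift A) φ n y) := hlox.trans hhiy
    have h3 := Real.log_le_log (by positivity) key
    rw [Real.log_mul (by positivity) (Real.exp_ne_zero _),
      Real.log_mul (by positivity) (Real.exp_ne_zero _),
      Real.log_exp, Real.log_exp, Real.log_inv] at h3
    linarith
end

section
/- Let X be a finitely primitive countable Markov shift with associated finite set Λ of admissible strings all of length N, let φ: X → ℝ be measurable and μ_φ a Gibbs state for φ. Then there exists c > 0 such that for every pair of symbols (a,b) ∈ S×S and every integer n > N, μ_φ([a] ∩ σ^{-n}[b]) ≥ c · μ_φ[a] · μ_φ[b]. -/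
open MeasureTheory Filter Topology Set
open scoped ENNReal NNReal

namespace CMS

/-! ### Generic dynamical notions -/

variable {X : Type*}

/-! ### Large deviations notions -/

variable {Y : Type*}

/-! ### Countable Markov shifts -/

variable {S : Type*}

variable (A : S → S → Prop)

variable {A}

variable (A)

/-! ### Auxiliary lemmas for the transition lemma -/

section Aux

variable {A}

lemma shift_iter_coord (x : Space A) (m i : ℕ) : ((shift A)^[m] x).1 i = x.1 (i + m) := by
  induction m generalizing x with
  | zero => rfl
  | succ m ih =>
    rw [Function.iterate_succ_apply, ih (shift A x)]
    show x.1 (i + m + 1) = x.1 (i + (m + 1))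
    rw [Nat.add_assoc]

@[simp] lemma word_length (x : Space A) (n : ℕ) : (word x n).length = n :=
  List.length_ofFn

lemma word_get (x : Space A) (n : ℕ) (i : Fin (word x n).length) :
    (word x n).get i = x.1 i := by
  exact List.get_ofFn (fun i : Fin n => x.1 i) i

lemma word_add (x : Space A) (m k : ℕ) :
    word x (m + k) = word x m ++ word ((shift A)^[m] x) k := by
  show List.ofFn _ = _
  rw [List.ofFn_add]
  congr 1
  exact congrArg List.ofFn (funext fun i => by
    simp [shift_iter_coord, Nat.add_comm])

lemma word_chain' (x : Space A) (n : ℕ) : List.Chain' A (word x n) := by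
  show List.IsChain A (List.ofFn _)
  rw [List.isChain_ofFn]
  intro i hi
  exact x.2 i

lemma mem_cylinder_word (x : Space A) (n : ℕ) : x ∈ cylinder A (word x n) := by
  intro i
  exact (List.get_ofFn (fun i : Fin n => x.1 i) i).symm

lemma birkhoff_add (T : Space A → Space A) (φ : Space A → ℝ) (m k : ℕ) (x : Space A) :
    birkhoff T φ (m + k) x = birkhoff T φ m x + birkhoff T φ k (T^[m] x) := by
  induction k with
  | zero => simp [birkhoff]
  | succ k ih =>
    have h : m + (k + 1) = (m + k) + 1 := rfl
    rw [h]
    have e1 : birkhoff T φ ((m + k) + 1) x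
        = birkhoff T φ (m + k) x + φ (T^[m + k] x) :=
      Finset.sum_range_succ _ _
    have e2 : birkhoff T φ (k + 1) (T^[m] x)
        = birkhoff T φ k (T^[m] x) + φ (T^[k] (T^[m] x)) :=
      Finset.sum_range_succ _ _
    rw [e1, e2, ih, Nat.add_comm m k, Function.iterate_add_apply]
    ring

lemma cylinder_eq_iInter [TopologicalSpace S] (w : List S) :
    cylinder A w = ⋂ i : Fin w.length, (fun x : Space A => x.1 i) ⁻¹' {w.get i} := by
  ext x
  simp [cylinder, Set.mem_iInter]

lemma isOpen_cylinder [TopologicalSpace S] [DiscreteTopology S] (w : List S) :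
    IsOpen (cylinder A w) := by
  rw [cylinder_eq_iInter]
  refine isOpen_iInter_of_finite fun i => ?_
  exact (isOpen_discrete {w.get i}).preimage ((continuous_apply _).comp continuous_subtype_val)

lemma measurableSet_cylinder [TopologicalSpace S] [DiscreteTopology S] (w : List S) :
    MeasurableSet (cylinder A w) :=
  (isOpen_cylinder w).measurableSet

lemma cylinder_append (v w : List S) :
    cylinder A (v ++ w) = cylinder A v ∩ (shift A)^[v.length] ⁻¹' cylinder A w := by
  ext x
  constructor
  · intro h
    constructor
    · intro i
      have := h ⟨i.1, by rw [List.length_append]; omega⟩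
      simp only [List.get_eq_getElem] at this ⊢
      rw [List.getElem_append_left i.2] at this
      exact this
    · intro i
      have hlt : v.length + i.1 < (v ++ w).length := by
        rw [List.length_append]; omega
      have := h ⟨v.length + i.1, hlt⟩
      simp only [List.get_eq_getElem] at this ⊢
      rw [List.getElem_append_right (by omega)] at this
      simp only [shift_iter_coord]
      rw [Nat.add_comm i.1 v.length, this]
      congr 1
      omega
  · rintro ⟨h1, h2⟩ i
    rcases Nat.lt_or_ge i.1 v.length with h | h
    · have := h1 ⟨i.1, h⟩
      simp only [List.get_eq_getElem] at this ⊢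
      rw [List.getElem_append_left h]
      exact this
    · have hlen2 : (i : ℕ) < v.length + w.length := (List.length_append (as := v) (bs := w)) ▸ i.2
      have hi : i.1 - v.length < w.length := by omega
      have := h2 ⟨i.1 - v.length, hi⟩
      simp only [List.get_eq_getElem, shift_iter_coord] at this ⊢
      rw [List.getElem_append_right h]
      rw [← this]
      rw [show (i : ℕ) - v.length + v.length = (i : ℕ) by omega]

lemma exists_word_eq (hA1 : ∀ a : S, ∃ b, A a b) (w : List S) (hw : Admissible A w) :
    ∃ x : Space A, word x w.length = w := by
  classical
  have hne : w ≠ [] := hw.1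
  have hlen : 0 < w.length := List.length_pos_iff.2 hne
  set nxt : S → S := fun s => (hA1 s).choose with hnxt_def
  have hnxt : ∀ s, A s (nxt s) := fun s => (hA1 s).choose_spec
  set g : ℕ → S := fun k => nxt^[k] (w.getLast hne) with hg_def
  set f : ℕ → S := fun i => if h : i < w.length then w.get ⟨i, h⟩ else g (i + 1 - w.length)
    with hf_def
  have hchain : ∀ i, A (f i) (f (i + 1)) := by
    intro i
    rcases Nat.lt_or_ge (i + 1) w.length with h | h
    · have hi : i < w.length := by omega
      simp only [hf_def, dif_pos hi, dif_pos h]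
      exact List.isChain_iff_getElem.1 hw.2 i (by omega)
    · rcases Nat.eq_or_lt_of_le h with h' | h'
      · have hi : i < w.length := by omega
        simp only [hf_def, dif_pos hi, dif_neg (by omega : ¬ i + 1 < w.length)]
        have hget : w.get ⟨i, hi⟩ = w.getLast hne := by
          rw [List.getLast_eq_getElem]
          simp only [List.get_eq_getElem]
          congr 1
          omega
        rw [hget]
        have : i + 1 + 1 - w.length = 1 := by omega
        rw [this]
        exact hnxt _
      · simp only [hf_def, dif_neg (by omega : ¬ i < w.length),
          dif_neg (by omega : ¬ i + 1 < w.length)]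
        have : i + 1 + 1 - w.length = (i + 1 - w.length) + 1 := by omega
        rw [this, hg_def]
        simp only [Function.iterate_succ_apply']
        exact hnxt _
  refine ⟨⟨f, hchain⟩, ?_⟩
  apply List.ext_get (by simp [word])
  intro i h1 h2
  have hi : i < w.length := h2
  simp only [word, List.get_ofFn]
  show f i = w.get ⟨i, h2⟩
  simp only [hf_def, dif_pos hi]

lemma mem_cylinder_singleton [TopologicalSpace S] {a : S} {x : Space A} :
    x ∈ cylinder A [a] ↔ x.1 0 = a := by
  constructor
  · intro h
    simpa using h ⟨0, by simp⟩
  · intro h i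
    have h1 : (i : ℕ) = 0 := by
      have h := i.2
      simp only [List.length_singleton] at h
      omega
    have h2 : i = ⟨0, by simp⟩ := Fin.ext h1
    rw [h2]
    simpa using h

lemma cylinder_pos [TopologicalSpace S] {φ : Space A → ℝ} {μφ : Measure (Space A)} {c₀ P : ℝ}
    (hG : IsGibbsWith A φ μφ c₀ P) (hc₀ : 1 ≤ c₀)
    (hA1 : ∀ a : S, ∃ b, A a b) (w : List S) (hw : Admissible A w) :
    0 < (μφ (cylinder A w)).toReal := by
  obtain ⟨x, hx⟩ := exists_word_eq hA1 w hw
  have hlen : 1 ≤ w.length := List.length_pos_iff.2 hw.1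
  have hlow := (hG w.length hlen x).1
  rw [hx] at hlow
  have hc : (0:ℝ) < c₀ := lt_of_lt_of_le one_pos hc₀
  have hpos : 0 < c₀⁻¹ * Real.exp (-(P * w.length) + birkhoff (shift A) φ w.length x) := by
    positivity
  linarith

lemma key_est [TopologicalSpace S] {φ : Space A → ℝ} {μφ : Measure (Space A)} {c₀ P : ℝ}
    (hG : IsGibbsWith A φ μφ c₀ P) (hc₀ : 1 ≤ c₀)
    (hA1 : ∀ a : S, ∃ b, A a b)
    {ε : ℝ} (hε0 : 0 ≤ ε) (hε1 : ε ≤ 1)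
    (u l : List S) (b : S) (hu : 0 < u.length)
    (hadm : Admissible A (u ++ l ++ [b]))
    (hεl : l ≠ [] → ε ≤ (μφ (cylinder A l)).toReal) :
    ε / c₀ ^ 4 * (μφ (cylinder A u)).toReal * (μφ (cylinder A [b])).toReal ≤
      (μφ (cylinder A (u ++ l ++ [b]))).toReal := by
  have hc : (0:ℝ) < c₀ := lt_of_lt_of_le one_pos hc₀
  have hc' : c₀ ≠ 0 := ne_of_gt hc
  set m := u.length with hm
  set K := l.length with hK
  obtain ⟨x, hx⟩ := exists_word_eq hA1 (u ++ l ++ [b]) hadm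
  have hL : (u ++ l ++ [b]).length = m + (K + 1) := by
    simp [List.length_append, hm, hK]
  rw [hL] at hx
  set y := (shift A)^[m] x with hy
  set z := (shift A)^[K] y with hz
  have hsplit : word x (m + (K + 1)) = word x m ++ (word y K ++ word z 1) := by
    rw [word_add x m (K + 1), word_add y K 1]
  have hx' : word x m ++ (word y K ++ word z 1) = u ++ (l ++ [b]) := by
    rw [← hsplit, hx, List.append_assoc]
  have h1 := List.append_inj hx' (by rw [word_length])
  have h2 := List.append_inj h1.2 (by rw [word_length])
  -- Gibbs bounds
  have hlow := (hG (m + (K + 1)) (by omega) x).1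
  rw [hx] at hlow
  set a1 := Real.exp (-(P * (m:ℕ)) + birkhoff (shift A) φ m x) with ha1
  set a2 := Real.exp (-(P * (K:ℕ)) + birkhoff (shift A) φ K y) with ha2
  set a3 := Real.exp (-(P * ((1:ℕ):ℝ)) + birkhoff (shift A) φ 1 z) with ha3
  have hprod : Real.exp (-(P * ((m + (K + 1) : ℕ) : ℝ))
      + birkhoff (shift A) φ (m + (K + 1)) x) = a1 * a2 * a3 := by
    rw [birkhoff_add (shift A) φ m (K + 1) x, ← hy, birkhoff_add (shift A) φ K 1 y, ← hz,
      ha1, ha2, ha3, ← Real.exp_add, ← Real.exp_add]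
    congr 1
    push_cast
    ring
  rw [hprod] at hlow
  have ha1p : 0 < a1 := Real.exp_pos _
  have ha2p : 0 < a2 := Real.exp_pos _
  have ha3p : 0 < a3 := Real.exp_pos _
  have hb1 : (μφ (cylinder A u)).toReal ≤ c₀ * a1 := by
    have := (hG m hu x).2
    rw [h1.1] at this
    exact this
  have hb3 : (μφ (cylinder A [b])).toReal ≤ c₀ * a3 := by
    have := (hG 1 le_rfl z).2
    rw [h2.2] at this
    exact this
  have hb2 : ε ≤ c₀ * a2 := by
    by_cases hl : l = []
    · have hK0 : K = 0 := by rw [hK, hl]; rfl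
      have : a2 = 1 := by
        rw [ha2, hK0]
        simp [birkhoff]
      rw [this]
      linarith
    · have hKpos : 1 ≤ K := List.length_pos_iff.2 hl
      have := (hG K hKpos y).2
      rw [h2.1] at this
      exact le_trans (hεl hl) this
  -- combine
  have t1 : ε * (μφ (cylinder A u)).toReal ≤ (c₀ * a2) * (c₀ * a1) :=
    mul_le_mul hb2 hb1 ENNReal.toReal_nonneg (by positivity)
  have t2 : ε * (μφ (cylinder A u)).toReal * (μφ (cylinder A [b])).toReal
      ≤ ((c₀ * a2) * (c₀ * a1)) * (c₀ * a3) :=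
    mul_le_mul t1 hb3 ENNReal.toReal_nonneg (by positivity)
  calc ε / c₀ ^ 4 * (μφ (cylinder A u)).toReal * (μφ (cylinder A [b])).toReal
      = (ε * (μφ (cylinder A u)).toReal * (μφ (cylinder A [b])).toReal) / c₀ ^ 4 := by ring
    _ ≤ (((c₀ * a2) * (c₀ * a1)) * (c₀ * a3)) / c₀ ^ 4 :=
        (div_le_div_iff_of_pos_right (by positivity)).mpr t2
    _ = c₀⁻¹ * (a1 * a2 * a3) := by field_simp
    _ ≤ (μφ (cylinder A (u ++ l ++ [b]))).toReal := hlow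

end Aux

end CMS

open CMS in
/-- **Transition lemma.** For a finitely primitive countable Markov shift (with associated
finite set `Λ` of admissible words, all of length `N`) and a Gibbs state `μφ`, there is `c > 0`
with `μφ([a] ∩ σ^{-n}[b]) ≥ c μφ[a] μφ[b]` for all symbols `a, b` and all `n > N`. -/
theorem transition_lemma {S : Type*} [Countable S] [TopologicalSpace S] [DiscreteTopology S]
    (A : S → S → Prop) (hA : NoZeroRowCol A)
    (Λ : Finset (List S)) (N : ℕ) (hlen : ∀ l ∈ Λ, l.length = N)
    (hprim : ∀ v w : List S, Admissible A v → Admissible A w →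
      ∃ l ∈ Λ, Admissible A (v ++ l ++ w))
    (φ : Space A → ℝ) (hφ : Measurable φ)
    (μφ : Measure (Space A)) (hprob : IsProbabilityMeasure μφ) (c₀ P : ℝ) (hc₀ : 1 ≤ c₀)
    (hGibbs : IsGibbsWith A φ μφ c₀ P) :
    ∃ c : ℝ, 0 < c ∧ ∀ a b : S, ∀ n : ℕ, N < n →
      c * (μφ (cylinder A [a])).toReal * (μφ (cylinder A [b])).toReal ≤
        (μφ (cylinder A [a] ∩ (shift A)^[n] ⁻¹' cylinder A [b])).toReal := by
  classical
  obtain ⟨hA1, -⟩ := hA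
  have hc : (0:ℝ) < c₀ := lt_of_lt_of_le one_pos hc₀
  rcases isEmpty_or_nonempty S with hS | hS
  · exact ⟨1, one_pos, fun a => (IsEmpty.false a).elim⟩
  obtain ⟨ε, hε0, hε1, hεl⟩ : ∃ ε : ℝ, 0 < ε ∧ ε ≤ 1 ∧
      ∀ l ∈ Λ, Admissible A l → ε ≤ (μφ (cylinder A l)).toReal := by
    rcases Λ.eq_empty_or_nonempty with h | h
    · exact ⟨1, one_pos, le_rfl, by simp [h]⟩
    · refine ⟨min 1 (Λ.inf' h fun l =>
        if Admissible A l then (μφ (cylinder A l)).toReal else 1), ?_, min_le_left _ _, ?_⟩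
      · refine lt_min one_pos ?_
        rw [Finset.lt_inf'_iff]
        intro l hl
        split_ifs with hadm
        · exact cylinder_pos hGibbs hc₀ hA1 l hadm
        · exact one_pos
      · intro l hl hadm
        refine le_trans (min_le_right _ _) (le_trans (Finset.inf'_le _ hl) ?_)
        rw [if_pos hadm]
  refine ⟨ε / c₀ ^ 4, by positivity, ?_⟩
  intro a b n hn
  set m := n - N with hmdef
  have hmn : n = m + N := by omega
  have hm1 : 0 < m := by omega
  set W := {u : List S // u.length = m ∧ List.Chain' A u ∧
    ∀ h : 0 < u.length, u.get ⟨0, h⟩ = a} with hW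
  have hadm_u : ∀ u : W, Admissible A u.1 := fun u =>
    ⟨fun h => by have := u.2.1; rw [h] at this; simp at this; omega, u.2.2.1⟩
  have hadm_b : Admissible A [b] := ⟨by simp, List.isChain_singleton b⟩
  choose L hLΛ hLadm using fun u : W => hprim u.1 [b] (hadm_u u) hadm_b
  have hLlen : ∀ u : W, (L u).length = N := fun u => hlen _ (hLΛ u)
  -- covering of [a]
  have hcover : cylinder A [a] ⊆ ⋃ u : W, cylinder A u.1 := by
    intro x hx
    have hx0 : x.1 0 = a := mem_cylinder_singleton.1 hx
    refine Set.mem_iUnion.2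
      ⟨⟨word x m, word_length x m, word_chain' x m, fun h => ?_⟩, mem_cylinder_word x m⟩
    rw [word_get]
    exact hx0
  -- each big cylinder is inside the target
  have hpre : ∀ u : W, cylinder A (u.1 ++ L u ++ [b]) ⊆ cylinder A u.1 := by
    intro u
    rw [cylinder_append, cylinder_append]
    intro x hx
    exact hx.1.1
  have hsub : ∀ u : W, cylinder A (u.1 ++ L u ++ [b]) ⊆
      cylinder A [a] ∩ (shift A)^[n] ⁻¹' cylinder A [b] := by
    intro u x hx
    have hlen2 : (u.1 ++ L u).length = n := by
      rw [List.length_append, u.2.1, hLlen u]; omega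
    have hxu : x ∈ cylinder A u.1 := hpre u hx
    rw [cylinder_append] at hx
    constructor
    · refine mem_cylinder_singleton.2 ?_
      have h0 := hxu ⟨0, by rw [u.2.1]; exact hm1⟩
      rw [h0]
      exact u.2.2.2 _
    · rw [hlen2] at hx
      exact hx.2
  -- pairwise disjointness
  have hdisj : Pairwise fun u v : W =>
      Disjoint (cylinder A (u.1 ++ L u ++ [b])) (cylinder A (v.1 ++ L v ++ [b])) := by
    intro u v huv
    rw [Set.disjoint_left]
    intro x hxu hxv
    apply huv
    have hu' := hpre u hxu
    have hv' := hpre v hxv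
    refine Subtype.ext (List.ext_get (by rw [u.2.1, v.2.1]) fun i h1 h2 => ?_)
    exact (hu' ⟨i, h1⟩).symm.trans (hv' ⟨i, h2⟩)
  -- measure estimates
  haveI := hprob
  have hfin : ∀ s : Set (Space A), μφ s ≠ ⊤ := fun s => measure_ne_top μφ s
  have hkey : ∀ u : W,
      ENNReal.ofReal (ε / c₀ ^ 4) * μφ (cylinder A u.1) * μφ (cylinder A [b])
        ≤ μφ (cylinder A (u.1 ++ L u ++ [b])) := by
    intro u
    have hLchain : L u ≠ [] → Admissible A (L u) := by
      intro hne
      exact ⟨hne, List.IsChain.infix (hLadm u).2 ⟨u.1, [b], rfl⟩⟩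
    have hre := key_est hGibbs hc₀ hA1 hε0.le hε1 u.1 (L u) b
      (by rw [u.2.1]; exact hm1) (hLadm u)
      (fun hne => hεl _ (hLΛ u) (hLchain hne))
    have h1 : ENNReal.ofReal (ε / c₀ ^ 4 * (μφ (cylinder A u.1)).toReal *
        (μφ (cylinder A [b])).toReal) ≤ μφ (cylinder A (u.1 ++ L u ++ [b])) :=
      ENNReal.ofReal_le_of_le_toReal hre
    rwa [ENNReal.ofReal_mul (by positivity), ENNReal.ofReal_mul (by positivity),
      ENNReal.ofReal_toReal (hfin _), ENNReal.ofReal_toReal (hfin _)] at h1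
  have hUb : μφ (cylinder A [a]) ≤ ∑' u : W, μφ (cylinder A u.1) :=
    (measure_mono hcover).trans (measure_iUnion_le _)
  have hsum : ∑' u : W, μφ (cylinder A (u.1 ++ L u ++ [b]))
      = μφ (⋃ u : W, cylinder A (u.1 ++ L u ++ [b])) :=
    (measure_iUnion hdisj fun u => measurableSet_cylinder _).symm
  have hmain : ENNReal.ofReal (ε / c₀ ^ 4) * μφ (cylinder A [a]) * μφ (cylinder A [b])
      ≤ μφ (cylinder A [a] ∩ (shift A)^[n] ⁻¹' cylinder A [b]) := by
    calc ENNReal.ofReal (ε / c₀ ^ 4) * μφ (cylinder A [a]) * μφ (cylinder A [b])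
        ≤ ENNReal.ofReal (ε / c₀ ^ 4) * (∑' u : W, μφ (cylinder A u.1))
            * μφ (cylinder A [b]) := by gcongr
      _ = ∑' u : W, ENNReal.ofReal (ε / c₀ ^ 4) * μφ (cylinder A u.1)
            * μφ (cylinder A [b]) := by
          rw [ENNReal.tsum_mul_right, ENNReal.tsum_mul_left]
      _ ≤ ∑' u : W, μφ (cylinder A (u.1 ++ L u ++ [b])) :=
          ENNReal.tsum_le_tsum hkey
      _ = μφ (⋃ u : W, cylinder A (u.1 ++ L u ++ [b])) := hsum
      _ ≤ μφ (cylinder A [a] ∩ (shift A)^[n] ⁻¹' cylinder A [b]) :=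
          measure_mono (Set.iUnion_subset hsub)
  have hfinal := ENNReal.toReal_mono (hfin _) hmain
  rwa [ENNReal.toReal_mul, ENNReal.toReal_mul,
    ENNReal.toReal_ofReal (by positivity)] at hfinal
end

section
/- Let X be a finitely primitive countable Markov shift, φ: X → ℝ a measurable function and μ_φ a Gibbs state for φ. Then for every symbol a ∈ S and every y ∈ X, P(φ) = lim_{n→∞} (1/n) log Z_n(φ,[a]∩Per_n(σ)) = lim_{n→∞} (1/n) log Z_n(φ,Per_n(σ)) = lim_{n→∞} (1/n) log Z_n(φ,[a]∩σ^{-n}y) = lim_{n→∞} (1/n) log Z_n(φ,σ^{-n}y). -/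
open MeasureTheory Filter Topology Set
open scoped ENNReal NNReal

section Aux

open CMS

variable {S : Type*} {A : S → S → Prop}

namespace CMSAux

/-! ### Basic shift space lemmas -/

lemma shift_iter (x : Space A) (k i : ℕ) : ((shift A)^[k] x).1 i = x.1 (i + k) := by
  induction k generalizing x with
  | zero => rfl
  | succ k ih =>
    rw [Function.iterate_succ_apply, ih]
    show x.1 (i + k + 1) = x.1 (i + (k + 1))
    ring_nf

lemma word_length (x : Space A) (n : ℕ) : (word x n).length = n := by
  simp [word]

lemma word_get (x : Space A) (n : ℕ) (i : ℕ) (h : i < (word x n).length) :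
    (word x n).get ⟨i, h⟩ = x.1 i := by
  simp [word]

lemma mem_cylinder_iff (x : Space A) (w : List S) :
    x ∈ cylinder A w ↔ ∀ i : Fin w.length, x.1 i = w.get i := Iff.rfl

lemma mem_cylinder_word_self (x : Space A) (n : ℕ) : x ∈ cylinder A (word x n) := by
  intro i
  rw [word_get]

lemma word_eq_of_mem_cylinder {x : Space A} {w : List S} (h : x ∈ cylinder A w) :
    word x w.length = w := by
  apply List.ext_get (by simp [word_length])
  intro i h1 h2
  rw [word_get]
  exact h ⟨i, h2⟩

lemma word_eq_apply {x x' : Space A} {n : ℕ} (h : word x n = word x' n) {i : ℕ} (hi : i < n) :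
    x.1 i = x'.1 i := by
  have h' : (fun j : Fin n => x.1 j) = fun j : Fin n => x'.1 j := List.ofFn_injective h
  exact congrFun h' ⟨i, hi⟩

lemma cylinder_nil : cylinder A ([] : List S) = Set.univ := by
  ext x
  simp only [mem_cylinder_iff, Set.mem_univ, iff_true]
  intro i
  exact absurd i.2 (by simp)

lemma chain'_word (x : Space A) (n : ℕ) : (word x n).Chain' A := by
  rw [word]
  refine List.isChain_ofFn.mpr ?_
  intro i hi
  exact x.2 i

lemma admissible_word (x : Space A) {n : ℕ} (hn : 1 ≤ n) : Admissible A (word x n) := by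
  refine ⟨?_, chain'_word x n⟩
  intro h
  have := word_length x n
  rw [h] at this
  simp at this
  omega

lemma isOpen_cylinder [TopologicalSpace S] [DiscreteTopology S] (w : List S) :
    IsOpen (cylinder A w) := by
  have : cylinder A w = ⋂ i : Fin w.length, (fun x : Space A => x.1 i) ⁻¹' {w.get i} := by
    ext x; simp [mem_cylinder_iff]
  rw [this]
  refine isOpen_iInter_of_finite fun i => ?_
  have hc : Continuous (fun x : Space A => x.1 (i : ℕ)) :=
    (continuous_apply (i : ℕ)).comp continuous_subtype_val
  exact (isOpen_discrete _).preimage hc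

lemma measurableSet_cylinder [TopologicalSpace S] [DiscreteTopology S] (w : List S) :
    MeasurableSet (cylinder A w) := (isOpen_cylinder w).measurableSet

lemma cylinder_disjoint {v w : List S} (hlen : v.length = w.length) (hne : v ≠ w) :
    Disjoint (cylinder A v) (cylinder A w) := by
  rw [Set.disjoint_left]
  intro x hv hw
  refine hne (List.ext_get hlen fun i h1 h2 => ?_)
  rw [← hv ⟨i, h1⟩, ← hw ⟨i, h2⟩]

lemma birkhoff_add {X : Type*} (T : X → X) (φ : X → ℝ) (m k : ℕ) (x : X) :
    birkhoff T φ (m + k) x = birkhoff T φ m x + birkhoff T φ k (T^[m] x) := by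
  unfold birkhoff
  rw [Finset.sum_range_add]
  congr 1
  refine Finset.sum_congr rfl fun i _ => ?_
  rw [← Function.iterate_add_apply, add_comm i m]

/-- Existence of a point starting with a given symbol. -/
lemma exists_point (hA : NoZeroRowCol A) (a : S) : ∃ x : Space A, x.1 0 = a := by
  choose f hf using hA.1
  refine ⟨⟨fun n => f^[n] a, fun i => ?_⟩, rfl⟩
  show A (f^[i] a) (f^[i + 1] a)
  rw [Function.iterate_succ_apply']
  exact hf _

/-! ### Periodic and glued points -/

lemma per_apply {n : ℕ} (hn : 1 ≤ n) {x : Space A} (hx : (shift A)^[n] x = x) (i : ℕ) :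
    x.1 i = x.1 (i % n) := by
  induction i using Nat.strong_induction_on with
  | _ i ih =>
    rcases lt_or_ge i n with h | h
    · rw [Nat.mod_eq_of_lt h]
    · have h1 : x.1 i = x.1 (i - n) := by
        conv_lhs => rw [← Nat.sub_add_cancel h, ← shift_iter x n (i - n), hx]
      rw [h1, ih (i - n) (by omega)]
      congr 1
      conv_rhs => rw [← Nat.sub_add_cancel h, Nat.add_mod_right]

lemma injOn_word_per {n : ℕ} (hn : 1 ≤ n) :
    Set.InjOn (fun x => word x n) (perSet (shift A) n) := by
  intro x hx x' hx' h
  refine Subtype.ext (funext fun i => ?_)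
  rw [per_apply hn hx i, per_apply hn hx' i]
  exact word_eq_apply h (Nat.mod_lt _ (by omega))

lemma injOn_word_preim {n : ℕ} (y : Space A) :
    Set.InjOn (fun x => word x n) (preimSet (shift A) n y) := by
  intro x hx x' hx' h
  refine Subtype.ext (funext fun i => ?_)
  rcases lt_or_ge i n with hi | hi
  · exact word_eq_apply h hi
  · have h1 : x.1 i = y.1 (i - n) := by
      conv_lhs => rw [← Nat.sub_add_cancel hi, ← shift_iter x n (i - n), hx]
    have h2 : x'.1 i = y.1 (i - n) := by
      conv_lhs => rw [← Nat.sub_add_cancel hi, ← shift_iter x' n (i - n), hx']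
    rw [h1, h2]

lemma mod_succ (i n : ℕ) : (i + 1) % n = (i % n + 1) % n := by
  conv_lhs => rw [Nat.add_mod]
  rw [Nat.add_mod (i % n) 1 n, Nat.mod_mod_of_dvd _ dvd_rfl]

/-- Construction of a periodic point from a word `u` with `u ++ u` admissible. -/
lemma get_congr {α : Type*} (l : List α) {i j : ℕ} (hi : i < l.length) (hj : j < l.length)
    (h : i = j) : l.get ⟨i, hi⟩ = l.get ⟨j, hj⟩ := by subst h; rfl

lemma get_append_left' {α : Type*} {u v : List α} {i : ℕ} (h : i < u.length)
    (h2 : i < (u ++ v).length) : (u ++ v).get ⟨i, h2⟩ = u.get ⟨i, h⟩ := by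
  simp [List.getElem_append_left, h]

lemma get_append_right' {α : Type*} {u v : List α} {i : ℕ} (h : i < v.length)
    (h2 : u.length + i < (u ++ v).length) :
    (u ++ v).get ⟨u.length + i, h2⟩ = v.get ⟨i, h⟩ := by
  simp [List.getElem_append_right]

lemma mem_cylinder_singleton {x : Space A} {a : S} : x ∈ cylinder A [a] ↔ x.1 0 = a := by
  constructor
  · intro h
    exact h ⟨0, by simp⟩
  · rintro h ⟨iv, hiv⟩
    have h0 : iv = 0 := by simp at hiv; omega
    subst h0
    simpa using h

lemma word_one (y : Space A) : word y 1 = [y.1 0] := by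
  simp [word, List.ofFn_succ]

lemma exists_periodic (u : List S) (hu : u ≠ []) (hc : (u ++ u).Chain' A) :
    ∃ x : Space A, (shift A)^[u.length] x = x ∧
      ∀ i (h : i < u.length), x.1 i = u.get ⟨i, h⟩ := by
  set n := u.length with hn
  have hn1 : 1 ≤ n := List.length_pos_iff.2 hu
  have hmod : ∀ i : ℕ, i % n < n := fun i => Nat.mod_lt _ (by omega)
  have hA' : ∀ (j : ℕ) (h2 : j < (u ++ u).length) (h : j < n),
      (u ++ u).get ⟨j, h2⟩ = u.get ⟨j, h⟩ := by
    intro j h2 h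
    simp [List.getElem_append_left, h]
    exact List.getElem_append_left h
  have hB' : ∀ (j : ℕ) (h2 : n + j < (u ++ u).length) (h : j < n),
      (u ++ u).get ⟨n + j, h2⟩ = u.get ⟨j, h⟩ := by
    intro j h2 h
    simp [List.getElem_append_right, hn]
  have hlen : (u ++ u).length = n + n := by simp [hn]
  have hchain : ∀ i : ℕ, A (u.get ⟨i % n, hmod i⟩) (u.get ⟨(i + 1) % n, hmod (i + 1)⟩) := by
    intro i
    have hget : ∀ i (h : i < (u ++ u).length - 1), A ((u ++ u).get ⟨i, by omega⟩)
        ((u ++ u).get ⟨i + 1, by omega⟩) := fun i h => List.isChain_iff_getElem.mp hc i (by omega)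
    rcases lt_or_ge (i % n + 1) n with h | h
    · have h2 : (i + 1) % n = i % n + 1 := by
        rw [mod_succ, Nat.mod_eq_of_lt h]
      have key := hget (i % n) (by rw [hlen]; omega)
      rw [hA' (i % n) (by rw [hlen]; omega) (hmod i),
        hA' (i % n + 1) (by rw [hlen]; omega) h] at key
      rw [get_congr u (hmod (i + 1)) h h2]
      exact key
    · have hel : i % n + 1 = n := by have := hmod i; omega
      have h2 : (i + 1) % n = 0 := by rw [mod_succ, hel, Nat.mod_self]
      have key := hget (n - 1) (by rw [hlen]; omega)
      rw [hA' (n - 1) (by rw [hlen]; omega) (by omega)] at key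
      have e2 : (u ++ u).get ⟨n - 1 + 1, by rw [hlen]; omega⟩ = u.get ⟨0, by omega⟩ := by
        rw [get_congr (u ++ u) (by rw [hlen]; omega) (by rw [hlen]; omega)
          (show n - 1 + 1 = n + 0 by omega)]
        exact hB' 0 (by rw [hlen]; omega) (by omega)
      rw [e2] at key
      rw [get_congr u (hmod i) (by omega) (by omega : i % n = n - 1),
        get_congr u (hmod (i + 1)) (by omega) h2]
      exact key
  refine ⟨⟨fun i => u.get ⟨i % n, hmod i⟩, fun i => hchain i⟩, ?_, ?_⟩
  · refine Subtype.ext (funext fun i => ?_)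
    refine (shift_iter _ _ i).trans ?_
    show u.get ⟨(i + n) % n, _⟩ = u.get ⟨i % n, _⟩
    exact get_congr u _ _ (Nat.add_mod_right i n)
  · intro i h
    show u.get ⟨i % n, _⟩ = u.get ⟨i, h⟩
    exact get_congr u _ _ (Nat.mod_eq_of_lt h)

/-- Construction of a preimage point by gluing a word `u` to a point `y`. -/
lemma exists_glue (u : List S) (hu : u ≠ []) (hc : u.Chain' A) (y : Space A)
    (hlast : A (u.getLast hu) (y.1 0)) :
    ∃ x : Space A, (shift A)^[u.length] x = y ∧
      ∀ i (h : i < u.length), x.1 i = u.get ⟨i, h⟩ := by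
  set n := u.length with hn
  have hn1 : 1 ≤ n := List.length_pos_iff.2 hu
  have hchain : ∀ i : ℕ,
      A (if h : i < n then u.get ⟨i, h⟩ else y.1 (i - n))
        (if h : i + 1 < n then u.get ⟨i + 1, h⟩ else y.1 (i + 1 - n)) := by
    intro i
    rcases lt_or_ge (i + 1) n with h | h
    · rw [dif_pos (by omega), dif_pos h]
      exact List.isChain_iff_getElem.mp hc i (by omega)
    · rcases lt_or_ge i n with h2 | h2
      · have he : i = n - 1 := by omega
        rw [dif_pos h2, dif_neg (by omega)]
        have e1 : u.get ⟨i, h2⟩ = u.getLast hu := by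
          rw [List.getLast_eq_getElem]
          exact get_congr u h2 (by omega) (by omega)
        have e2 : i + 1 - n = 0 := by omega
        rw [e1, e2]
        exact hlast
      · rw [dif_neg (by omega), dif_neg (by omega)]
        have e : i + 1 - n = (i - n) + 1 := by omega
        rw [e]
        exact y.2 (i - n)
  refine ⟨⟨fun i => if h : i < n then u.get ⟨i, h⟩ else y.1 (i - n), hchain⟩, ?_, ?_⟩
  · refine Subtype.ext (funext fun i => ?_)
    refine (shift_iter _ _ i).trans ?_
    show (if h : i + n < n then u.get ⟨i + n, h⟩ else y.1 (i + n - n)) = y.1 i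
    rw [dif_neg (show ¬ i + n < n by omega)]
    rw [Nat.add_sub_cancel]
  · intro i h
    show (if h' : i < n then u.get ⟨i, h'⟩ else y.1 (i - n)) = u.get ⟨i, h⟩
    rw [dif_pos h]


/-! ### Gibbs estimates -/

section Gibbs

variable [TopologicalSpace S] {φ : Space A → ℝ} {μ : Measure (Space A)} {c₀ P : ℝ}

lemma word_zero (x : Space A) : word x 0 = [] := by simp [word]

lemma gibbs_exp_le [IsProbabilityMeasure μ] (hc₀ : 1 ≤ c₀) (hG : IsGibbsWith A φ μ c₀ P)
    (n : ℕ) (x : Space A) :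
    Real.exp (birkhoff (shift A) φ n x)
      ≤ c₀ * Real.exp (P * n) * (μ (cylinder A (word x n))).toReal := by
  have hc : (0:ℝ) < c₀ := by linarith
  rcases Nat.eq_zero_or_pos n with h | h
  · subst h
    rw [word_zero, cylinder_nil]
    simp [birkhoff]
    linarith
  · have h1 := (hG n h x).1
    rw [Real.exp_add, ← mul_assoc] at h1
    have h2 : c₀ * Real.exp (P * n) * (c₀⁻¹ * Real.exp (-(P * n)) *
        Real.exp (birkhoff (shift A) φ n x)) = Real.exp (birkhoff (shift A) φ n x) := by
      rw [Real.exp_neg]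
      have he : Real.exp (P * n) ≠ 0 := Real.exp_ne_zero _
      field_simp
      all_goals ring
    calc Real.exp (birkhoff (shift A) φ n x)
        = c₀ * Real.exp (P * n) * (c₀⁻¹ * Real.exp (-(P * n)) *
            Real.exp (birkhoff (shift A) φ n x)) := h2.symm
      _ ≤ c₀ * Real.exp (P * n) * (μ (cylinder A (word x n))).toReal := by
          refine mul_le_mul_of_nonneg_left h1 ?_
          positivity

lemma gibbs_le_exp [IsProbabilityMeasure μ] (hc₀ : 1 ≤ c₀) (hG : IsGibbsWith A φ μ c₀ P)
    (n : ℕ) (x : Space A) :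
    c₀⁻¹ * Real.exp (P * n) * (μ (cylinder A (word x n))).toReal
      ≤ Real.exp (birkhoff (shift A) φ n x) := by
  have hc : (0:ℝ) < c₀ := by linarith
  rcases Nat.eq_zero_or_pos n with h | h
  · subst h
    rw [word_zero, cylinder_nil]
    have h1 : c₀⁻¹ ≤ 1 := by
      rw [← inv_one]
      exact inv_anti₀ one_pos hc₀
    simp [birkhoff]
    linarith
  · have h1 := (hG n h x).2
    rw [Real.exp_add, ← mul_assoc] at h1
    have h2 : c₀⁻¹ * Real.exp (P * n) * (c₀ * Real.exp (-(P * n)) *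
        Real.exp (birkhoff (shift A) φ n x)) = Real.exp (birkhoff (shift A) φ n x) := by
      rw [Real.exp_neg]
      have he : Real.exp (P * n) ≠ 0 := Real.exp_ne_zero _
      field_simp
      all_goals ring
    calc c₀⁻¹ * Real.exp (P * n) * (μ (cylinder A (word x n))).toReal
        ≤ c₀⁻¹ * Real.exp (P * n) * (c₀ * Real.exp (-(P * n)) *
            Real.exp (birkhoff (shift A) φ n x)) := by
          refine mul_le_mul_of_nonneg_left h1 ?_
          positivity
      _ = Real.exp (birkhoff (shift A) φ n x) := h2

lemma gibbs_pos [IsProbabilityMeasure μ] (hc₀ : 1 ≤ c₀) (hG : IsGibbsWith A φ μ c₀ P)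
    (n : ℕ) (x : Space A) : 0 < (μ (cylinder A (word x n))).toReal := by
  have hc : (0:ℝ) < c₀ := by linarith
  rcases Nat.eq_zero_or_pos n with h | h
  · subst h
    rw [word_zero, cylinder_nil]
    simp
  · refine lt_of_lt_of_le ?_ (hG n h x).1
    positivity

lemma exists_min_cyl [IsProbabilityMeasure μ] (hc₀ : 1 ≤ c₀) (hG : IsGibbsWith A φ μ c₀ P)
    (Λ : Finset (List S)) :
    ∃ D : ℝ, 0 < D ∧ ∀ l ∈ Λ, (cylinder A l).Nonempty → D ≤ (μ (cylinder A l)).toReal := by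
  classical
  induction Λ using Finset.induction_on with
  | empty => exact ⟨1, one_pos, by simp⟩
  | @insert l Λ' hl ih =>
    obtain ⟨D, hD, hDle⟩ := ih
    rcases (cylinder A l).eq_empty_or_nonempty with he | ⟨z, hz⟩
    · refine ⟨D, hD, fun l' hl' hne => ?_⟩
      rcases Finset.mem_insert.mp hl' with rfl | h
      · rw [he] at hne; exact absurd hne (by simp [Set.not_nonempty_empty])
      · exact hDle l' h hne
    · have hpos : 0 < (μ (cylinder A l)).toReal := by
        have hw : word z l.length = l := word_eq_of_mem_cylinder hz
        have := gibbs_pos hc₀ hG l.length z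
        rwa [hw] at this
      refine ⟨min D ((μ (cylinder A l)).toReal), lt_min hD hpos, fun l' hl' hne => ?_⟩
      rcases Finset.mem_insert.mp hl' with rfl | h
      · exact min_le_right _ _
      · exact le_trans (min_le_left _ _) (hDle l' h hne)

lemma weight_bound [IsProbabilityMeasure μ] (hc₀ : 1 ≤ c₀) (hG : IsGibbsWith A φ μ c₀ P)
    (m N : ℕ) (x : Space A) (l : List S) (hlN : l.length = N)
    (hxl : ∀ i (h : i < N), x.1 (m + i) = l.get ⟨i, by omega⟩) :
    (c₀⁻¹ * Real.exp (P * m) * (μ (cylinder A (word x m))).toReal) *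
        (c₀⁻¹ * Real.exp (P * N) * (μ (cylinder A l)).toReal)
      ≤ Real.exp (birkhoff (shift A) φ (m + N) x) ∧
    (shift A)^[m] x ∈ cylinder A l := by
  have hc : (0:ℝ) < c₀ := by linarith
  have hmem : (shift A)^[m] x ∈ cylinder A l := by
    intro i
    have hi : (i : ℕ) < N := by rw [← hlN]; exact i.2
    rw [shift_iter, add_comm (i : ℕ) m]
    exact hxl i hi
  have hword : word ((shift A)^[m] x) N = l := by
    have := word_eq_of_mem_cylinder hmem
    rwa [hlN] at this
  refine ⟨?_, hmem⟩
  rw [birkhoff_add, Real.exp_add]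
  have h1 := gibbs_le_exp hc₀ hG m x
  have h2 := gibbs_le_exp hc₀ hG N ((shift A)^[m] x)
  rw [hword] at h2
  refine mul_le_mul h1 h2 ?_ (le_of_lt (Real.exp_pos _))
  have ht : (0:ℝ) ≤ (μ (cylinder A l)).toReal := ENNReal.toReal_nonneg
  positivity

end Gibbs

/-! ### Partition function estimates -/

section Zfn

variable [TopologicalSpace S] [DiscreteTopology S] [Countable S]
variable {φ : Space A → ℝ} {μ : Measure (Space A)} {c₀ P : ℝ}

lemma Zfn_mono {X : Type*} [MeasurableSpace X] (T : X → X) (ψ : X → ℝ) (n : ℕ)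
    {C C' : Set X} (h : C ⊆ C') : Zfn T ψ n C ≤ Zfn T ψ n C' :=
  ENNReal.tsum_mono_subtype (fun x => ENNReal.ofReal (Real.exp (birkhoff T ψ n x))) h

lemma Zfn_upper [IsProbabilityMeasure μ] (hc₀ : 1 ≤ c₀) (hG : IsGibbsWith A φ μ c₀ P)
    (n : ℕ) (C : Set (Space A)) (hinj : Set.InjOn (fun x => word x n) C) :
    Zfn (shift A) φ n C ≤ ENNReal.ofReal (c₀ * Real.exp (P * n)) := by
  have hcount : C.Countable :=
    Set.countable_of_injective_of_countable_image hinj (Set.to_countable _)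
  have := hcount.to_subtype
  have hle : ∀ x : C, ENNReal.ofReal (Real.exp (birkhoff (shift A) φ n (x : Space A)))
      ≤ ENNReal.ofReal (c₀ * Real.exp (P * n)) * μ (cylinder A (word (x : Space A) n)) := by
    intro x
    have h1 := gibbs_exp_le hc₀ hG n (x : Space A)
    have hc : (0:ℝ) < c₀ := by linarith
    calc ENNReal.ofReal (Real.exp (birkhoff (shift A) φ n (x : Space A)))
        ≤ ENNReal.ofReal (c₀ * Real.exp (P * n) *
            (μ (cylinder A (word (x : Space A) n))).toReal) := ENNReal.ofReal_le_ofReal h1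
      _ = ENNReal.ofReal (c₀ * Real.exp (P * n)) *
            ENNReal.ofReal ((μ (cylinder A (word (x : Space A) n))).toReal) :=
          ENNReal.ofReal_mul (by positivity)
      _ = _ := by rw [ENNReal.ofReal_toReal (measure_ne_top μ _)]
  calc Zfn (shift A) φ n C
      ≤ ∑' x : C, ENNReal.ofReal (c₀ * Real.exp (P * n)) *
          μ (cylinder A (word (x : Space A) n)) := ENNReal.tsum_le_tsum hle
    _ = ENNReal.ofReal (c₀ * Real.exp (P * n)) *
          ∑' x : C, μ (cylinder A (word (x : Space A) n)) := ENNReal.tsum_mul_left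
    _ ≤ ENNReal.ofReal (c₀ * Real.exp (P * n)) * 1 := by
        refine mul_le_mul_right ?_ _
        have hdis : Pairwise (Function.onFun Disjoint
            fun x : C => cylinder A (word (x : Space A) n)) := by
          intro x x' hne
          refine cylinder_disjoint (by simp [word_length]) fun he => ?_
          exact hne (Subtype.ext (hinj x.2 x'.2 he))
        rw [← measure_iUnion hdis fun x => measurableSet_cylinder _]
        exact le_trans (measure_mono (Set.subset_univ _)) measure_univ.le
    _ = _ := mul_one _

lemma Zfn_lower [IsFiniteMeasure μ] (n m : ℕ) (C : Set (Space A)) (a : S) {K : ℝ}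
    (hK : 0 ≤ K)
    (H : ∀ z : Space A, z ∈ cylinder A [a] → ∃ x ∈ C, word x m = word z m ∧
        K * (μ (cylinder A (word z m))).toReal ≤ Real.exp (birkhoff (shift A) φ n x)) :
    ENNReal.ofReal K * μ (cylinder A [a]) ≤ Zfn (shift A) φ n C := by
  classical
  set W := (fun z => word z m) '' (cylinder A [a]) with hW
  have hWc : W.Countable := Set.to_countable _
  have := hWc.to_subtype
  have hmem : ∀ w : W, ∃ z, z ∈ cylinder A [a] ∧ word z m = (w : List S) := fun w => w.2
  choose z hz hzw using hmem
  choose x hxC hxw hxK using fun w : W => H (z w) (hz w)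
  have hpinj : Function.Injective (fun w : W => (⟨x w, hxC w⟩ : C)) := by
    intro w w' he
    have hxx : x w = x w' := congrArg Subtype.val he
    apply Subtype.ext
    rw [← hzw w, ← hzw w', ← hxw w, ← hxw w', hxx]
  calc ENNReal.ofReal K * μ (cylinder A [a])
      ≤ ENNReal.ofReal K * ∑' w : W, μ (cylinder A (w : List S)) := by
        refine mul_le_mul_right ?_ _
        refine le_trans (measure_mono ?_) (measure_biUnion_le μ hWc _)
        intro u hu
        exact Set.mem_biUnion (Set.mem_image_of_mem _ hu) (mem_cylinder_word_self u m)
    _ = ∑' w : W, ENNReal.ofReal K * μ (cylinder A (w : List S)) := ENNReal.tsum_mul_left.symm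
    _ ≤ ∑' w : W, ENNReal.ofReal (Real.exp (birkhoff (shift A) φ n (x w))) := by
        refine ENNReal.tsum_le_tsum fun w => ?_
        have hb := hxK w
        rw [hzw w] at hb
        calc ENNReal.ofReal K * μ (cylinder A (w : List S))
            = ENNReal.ofReal (K * (μ (cylinder A (w : List S))).toReal) := by
              rw [ENNReal.ofReal_mul hK, ENNReal.ofReal_toReal (measure_ne_top μ _)]
          _ ≤ _ := ENNReal.ofReal_le_ofReal hb
    _ ≤ ∑' xx : C, ENNReal.ofReal (Real.exp (birkhoff (shift A) φ n (xx : Space A))) :=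
        ENNReal.tsum_comp_le_tsum_of_injective hpinj
          (fun xx : C => ENNReal.ofReal (Real.exp (birkhoff (shift A) φ n (xx : Space A))))
    _ = Zfn (shift A) φ n C := rfl

end Zfn

/-! ### Limit lemma -/

lemma tendsto_log_Zfn (P c₁ c₂ : ℝ) (hc₁ : 0 < c₁) (hc₂ : 0 < c₂) (Z : ℕ → ℝ≥0∞)
    (hb : ∀ᶠ n : ℕ in Filter.atTop, ENNReal.ofReal (c₁ * Real.exp (P * n)) ≤ Z n ∧
        Z n ≤ ENNReal.ofReal (c₂ * Real.exp (P * n))) :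
    Filter.Tendsto (fun n : ℕ => (((n : ℝ)⁻¹ : ℝ) : EReal) * ENNReal.log (Z n)) Filter.atTop
      (nhds ((P : ℝ) : EReal)) := by
  have hlim : ∀ c : ℝ, 0 < c → Filter.Tendsto
      (fun n : ℕ => (n : ℝ)⁻¹ * (Real.log c + P * n)) Filter.atTop (nhds P) := by
    intro c hc
    have h1 : Filter.Tendsto (fun n : ℕ => Real.log c * (n : ℝ)⁻¹ + P)
        Filter.atTop (nhds P) := by
      have := (tendsto_inv_atTop_nhds_zero_nat.const_mul (Real.log c)).add_const P
      simpa using this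
    refine h1.congr' ?_
    filter_upwards [Filter.eventually_ge_atTop 1] with n hn
    have hn0 : (n : ℝ) ≠ 0 := by positivity
    field_simp
    all_goals ring
  have hreal : Filter.Tendsto (fun n : ℕ => (n : ℝ)⁻¹ * Real.log (Z n).toReal)
      Filter.atTop (nhds P) := by
    refine tendsto_of_tendsto_of_tendsto_of_le_of_le' (hlim c₁ hc₁) (hlim c₂ hc₂) ?_ ?_
    · filter_upwards [hb, Filter.eventually_ge_atTop 1] with n hn hn1
      have htop : Z n ≠ ⊤ := ne_top_of_le_ne_top ENNReal.ofReal_ne_top hn.2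
      have hlb : c₁ * Real.exp (P * n) ≤ (Z n).toReal := by
        have := ENNReal.toReal_mono htop hn.1
        rwa [ENNReal.toReal_ofReal (by positivity)] at this
      have hlog : Real.log c₁ + P * n ≤ Real.log (Z n).toReal := by
        have h2 : Real.log (c₁ * Real.exp (P * n)) ≤ Real.log (Z n).toReal :=
          Real.log_le_log (by positivity) hlb
        rwa [Real.log_mul (by positivity) (Real.exp_ne_zero _), Real.log_exp] at h2
      exact mul_le_mul_of_nonneg_left hlog (by positivity)
    · filter_upwards [hb, Filter.eventually_ge_atTop 1] with n hn hn1
      have htop : Z n ≠ ⊤ := ne_top_of_le_ne_top ENNReal.ofReal_ne_top hn.2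
      have h0 : 0 < (Z n).toReal := by
        refine ENNReal.toReal_pos (fun h => ?_) htop
        rw [h] at hn
        have hofpos : (0:ℝ≥0∞) < ENNReal.ofReal (c₁ * Real.exp (P * n)) :=
          ENNReal.ofReal_pos.2 (by positivity)
        exact hofpos.not_ge hn.1
      have hub : (Z n).toReal ≤ c₂ * Real.exp (P * n) := by
        have := ENNReal.toReal_mono ENNReal.ofReal_ne_top hn.2
        rwa [ENNReal.toReal_ofReal (by positivity)] at this
      have hlog : Real.log (Z n).toReal ≤ Real.log c₂ + P * n := by
        have h2 : Real.log (Z n).toReal ≤ Real.log (c₂ * Real.exp (P * n)) :=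
          Real.log_le_log h0 hub
        rwa [Real.log_mul (by positivity) (Real.exp_ne_zero _), Real.log_exp] at h2
      exact mul_le_mul_of_nonneg_left hlog (by positivity)
  refine (EReal.tendsto_coe.2 hreal).congr' ?_
  filter_upwards [hb] with n hn
  have h0 : Z n ≠ 0 := by
    intro h
    rw [h] at hn
    have hofpos : (0:ℝ≥0∞) < ENNReal.ofReal (c₁ * Real.exp (P * n)) :=
      ENNReal.ofReal_pos.2 (by positivity)
    exact hofpos.not_ge hn.1
  have htop : Z n ≠ ⊤ := ne_top_of_le_ne_top ENNReal.ofReal_ne_top hn.2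
  have hzr : Z n = ENNReal.ofReal ((Z n).toReal) := (ENNReal.ofReal_toReal htop).symm
  have hpos : 0 < (Z n).toReal := ENNReal.toReal_pos h0 htop
  conv_rhs => rw [hzr, ENNReal.log_ofReal_of_pos hpos]
  rw [← EReal.coe_mul]

end CMSAux

end Aux

open CMS in
/-- **Expressions of the pressure.** For a finitely primitive countable Markov shift with a
Gibbs state (whose Gibbs constant `P` equals the pressure `P(φ)`), for all `a ∈ S` and
`y ∈ X` the exponential growth rates of `Z_n(φ, [a] ∩ Per_n(σ))`, `Z_n(φ, Per_n(σ))`,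
`Z_n(φ, [a] ∩ σ^{-n}y)` and `Z_n(φ, σ^{-n}y)` all equal `P(φ)`. -/
theorem pressure_expressions {S : Type*} [Countable S] [TopologicalSpace S] [DiscreteTopology S]
    (A : S → S → Prop) (hA : NoZeroRowCol A) (hprim : FinitelyPrimitive A)
    (φ : Space A → ℝ) (hφ : Measurable φ)
    (μφ : Measure (Space A)) (hprob : IsProbabilityMeasure μφ) (c₀ P : ℝ) (hc₀ : 1 ≤ c₀)
    (hGibbs : IsGibbsWith A φ μφ c₀ P) :
    ∀ a : S, ∀ y : Space A,
      Tendsto (fun n : ℕ => (((n : ℝ)⁻¹ : ℝ) : EReal) *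
          ENNReal.log (Zfn (shift A) φ n (cylinder A [a] ∩ perSet (shift A) n)))
        atTop (nhds ((P : ℝ) : EReal)) ∧
      Tendsto (fun n : ℕ => (((n : ℝ)⁻¹ : ℝ) : EReal) *
          ENNReal.log (Zfn (shift A) φ n (perSet (shift A) n)))
        atTop (nhds ((P : ℝ) : EReal)) ∧
      Tendsto (fun n : ℕ => (((n : ℝ)⁻¹ : ℝ) : EReal) *
          ENNReal.log (Zfn (shift A) φ n (cylinder A [a] ∩ preimSet (shift A) n y)))
        atTop (nhds ((P : ℝ) : EReal)) ∧
      Tendsto (fun n : ℕ => (((n : ℝ)⁻¹ : ℝ) : EReal) *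
          ENNReal.log (Zfn (shift A) φ n (preimSet (shift A) n y)))
        atTop (nhds ((P : ℝ) : EReal)) := by
  intro a y
  classical
  haveI := hprob
  obtain ⟨Λ, ⟨N, hΛN⟩, hΛ⟩ := hprim
  obtain ⟨D₀, hD₀, hD₀le⟩ := CMSAux.exists_min_cyl (μ := μφ) hc₀ hGibbs Λ
  have hc₀0 : (0:ℝ) < c₀ := by linarith
  obtain ⟨x₀, hx₀⟩ := CMSAux.exists_point hA a
  have hwa : word x₀ 1 = [a] := by rw [CMSAux.word_one, hx₀]
  have hμa : 0 < (μφ (cylinder A [a])).toReal := by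
    have := CMSAux.gibbs_pos hc₀ hGibbs 1 x₀
    rwa [hwa] at this
  set c₁ : ℝ := c₀⁻¹ * c₀⁻¹ * D₀ * (μφ (cylinder A [a])).toReal with hc₁def
  have hc₁ : 0 < c₁ := by positivity
  have lower : ∀ n : ℕ, N + 1 ≤ n →
      ENNReal.ofReal (c₁ * Real.exp (P * n)) ≤
        Zfn (shift A) φ n (cylinder A [a] ∩ perSet (shift A) n) ∧
      ENNReal.ofReal (c₁ * Real.exp (P * n)) ≤
        Zfn (shift A) φ n (cylinder A [a] ∩ preimSet (shift A) n y) := by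
    intro n hn
    set m := n - N with hm
    have hm1 : 1 ≤ m := by omega
    have hmn : m + N = n := by omega
    set K : ℝ := c₀⁻¹ * Real.exp (P * m) * (c₀⁻¹ * Real.exp (P * N) * D₀) with hKdef
    have hK : (0:ℝ) ≤ K := by positivity
    have hKc : ENNReal.ofReal (c₁ * Real.exp (P * n)) ≤
        ENNReal.ofReal K * μφ (cylinder A [a]) := by
      rw [← ENNReal.ofReal_toReal (measure_ne_top μφ (cylinder A [a])),
        ← ENNReal.ofReal_mul hK]
      refine ENNReal.ofReal_le_ofReal (le_of_eq ?_)
      have hcast : (n : ℝ) = (m : ℝ) + (N : ℝ) := by exact_mod_cast hmn.symm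
      rw [hc₁def, hKdef, hcast, mul_add, Real.exp_add]
      ring
    -- the common construction step
    have step : ∀ z : Space A, z ∈ cylinder A [a] → ∀ l ∈ Λ, ∀ x : Space A,
        (∀ i (h : i < (word z m ++ l).length), x.1 i = (word z m ++ l).get ⟨i, h⟩) →
        x ∈ cylinder A [a] ∧ word x m = word z m ∧
          K * (μφ (cylinder A (word z m))).toReal ≤
            Real.exp (birkhoff (shift A) φ n x) := by
      intro z hz l hlΛ x hxget
      have hlN : l.length = N := hΛN l hlΛ
      have hulen : (word z m ++ l).length = n := by
        simp [CMSAux.word_length, hlN]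
        omega
      have hxw : ∀ i (h : i < m), x.1 i =
          (word z m).get ⟨i, by rw [CMSAux.word_length]; exact h⟩ := by
        intro i h
        rw [hxget i (by rw [hulen]; omega)]
        exact CMSAux.get_append_left' (by rw [CMSAux.word_length]; exact h) _
      have hxmem : x ∈ cylinder A (word z m) := by
        intro i
        have hi : (i : ℕ) < m := lt_of_lt_of_le i.2 (CMSAux.word_length z m).le
        exact hxw i hi
      have hword : word x m = word z m := by
        have := CMSAux.word_eq_of_mem_cylinder hxmem
        rwa [CMSAux.word_length] at this
      have hxa : x ∈ cylinder A [a] := by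
        rw [CMSAux.mem_cylinder_singleton]
        rw [hxw 0 (by omega), CMSAux.word_get]
        exact CMSAux.mem_cylinder_singleton.mp hz
      have hxl : ∀ i (h : i < N), x.1 (m + i) = l.get ⟨i, by omega⟩ := by
        intro i h
        rw [hxget (m + i) (by rw [hulen]; omega)]
        rw [CMSAux.get_congr (word z m ++ l) (by rw [hulen]; omega)
          (by rw [hulen, CMSAux.word_length]; omega) (show m + i = (word z m).length + i by
            rw [CMSAux.word_length])]
        exact CMSAux.get_append_right' (by rw [hlN]; exact h) _
      obtain ⟨hwt, hmeml⟩ := CMSAux.weight_bound hc₀ hGibbs m N x l hlN hxl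
      refine ⟨hxa, hword, ?_⟩
      have hDl : D₀ ≤ (μφ (cylinder A l)).toReal := hD₀le l hlΛ ⟨_, hmeml⟩
      have ht0 : (0:ℝ) ≤ (μφ (cylinder A (word z m))).toReal := ENNReal.toReal_nonneg
      calc K * (μφ (cylinder A (word z m))).toReal
          = (c₀⁻¹ * Real.exp (P * m) * (μφ (cylinder A (word z m))).toReal) *
              (c₀⁻¹ * Real.exp (P * N) * D₀) := by rw [hKdef]; ring
        _ ≤ (c₀⁻¹ * Real.exp (P * m) * (μφ (cylinder A (word z m))).toReal) *
              (c₀⁻¹ * Real.exp (P * N) * (μφ (cylinder A l)).toReal) := by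
            refine mul_le_mul_of_nonneg_left ?_ (by positivity)
            exact mul_le_mul_of_nonneg_left hDl (by positivity)
        _ ≤ Real.exp (birkhoff (shift A) φ (m + N) x) := by rw [← hword]; exact hwt
        _ = Real.exp (birkhoff (shift A) φ n x) := by rw [hmn]
    constructor
    · refine le_trans hKc (CMSAux.Zfn_lower (μ := μφ) n m _ a hK ?_)
      intro z hz
      have hadm : Admissible A (word z m) := CMSAux.admissible_word z hm1
      obtain ⟨l, hlΛ, hadm2⟩ := hΛ (word z m) (word z m) hadm hadm
      have hlN : l.length = N := hΛN l hlΛ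
      have hulen : (word z m ++ l).length = n := by
        simp [CMSAux.word_length, hlN]
        omega
      have hune : word z m ++ l ≠ [] := by
        intro h
        have := congrArg List.length h
        rw [hulen] at this
        simp at this
        omega
      have hcu : ((word z m ++ l) ++ (word z m ++ l)).Chain' A := by
        obtain ⟨hcu1, -, hlink⟩ := List.isChain_append.mp hadm2.2
        refine List.isChain_append.mpr ⟨hcu1, hcu1, ?_⟩
        intro p hp q hq
        refine hlink p hp q ?_
        rwa [List.head?_append_of_ne_nil _ hadm.1] at hq
      obtain ⟨x, hxper, hxget⟩ := CMSAux.exists_periodic (word z m ++ l) hune hcu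
      obtain ⟨hxa, hword, hwt⟩ := step z hz l hlΛ x hxget
      rw [hulen] at hxper
      exact ⟨x, ⟨hxa, hxper⟩, hword, hwt⟩
    · refine le_trans hKc (CMSAux.Zfn_lower (μ := μφ) n m _ a hK ?_)
      intro z hz
      have hadm : Admissible A (word z m) := CMSAux.admissible_word z hm1
      obtain ⟨l, hlΛ, hadm2⟩ := hΛ (word z m) (word y 1) hadm (CMSAux.admissible_word y le_rfl)
      have hlN : l.length = N := hΛN l hlΛ
      have hulen : (word z m ++ l).length = n := by
        simp [CMSAux.word_length, hlN]
        omega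
      have hune : word z m ++ l ≠ [] := by
        intro h
        have := congrArg List.length h
        rw [hulen] at this
        simp at this
        omega
      obtain ⟨hcu, -, hlink⟩ := List.isChain_append.mp hadm2.2
      have hlast : A ((word z m ++ l).getLast hune) (y.1 0) := by
        refine hlink _ (List.getLast?_eq_getLast hune) (y.1 0) ?_
        rw [CMSAux.word_one]
        rfl
      obtain ⟨x, hxpre, hxget⟩ := CMSAux.exists_glue (word z m ++ l) hune hcu y hlast
      obtain ⟨hxa, hword, hwt⟩ := step z hz l hlΛ x hxget
      rw [hulen] at hxpre
      exact ⟨x, ⟨hxa, hxpre⟩, hword, hwt⟩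
  have upperPer : ∀ n : ℕ, 1 ≤ n → Zfn (shift A) φ n (perSet (shift A) n) ≤
      ENNReal.ofReal (c₀ * Real.exp (P * n)) :=
    fun n hn => CMSAux.Zfn_upper hc₀ hGibbs n _ (CMSAux.injOn_word_per hn)
  have upperPre : ∀ n : ℕ, Zfn (shift A) φ n (preimSet (shift A) n y) ≤
      ENNReal.ofReal (c₀ * Real.exp (P * n)) :=
    fun n => CMSAux.Zfn_upper hc₀ hGibbs n _ (CMSAux.injOn_word_preim y)
  refine ⟨?_, ?_, ?_, ?_⟩
  · refine CMSAux.tendsto_log_Zfn P c₁ c₀ hc₁ hc₀0 _ ?_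
    filter_upwards [eventually_ge_atTop (N + 1)] with n hn
    exact ⟨(lower n hn).1,
      le_trans (CMSAux.Zfn_mono _ _ _ Set.inter_subset_right) (upperPer n (by omega))⟩
  · refine CMSAux.tendsto_log_Zfn P c₁ c₀ hc₁ hc₀0 _ ?_
    filter_upwards [eventually_ge_atTop (N + 1)] with n hn
    exact ⟨le_trans (lower n hn).1 (CMSAux.Zfn_mono _ _ _ Set.inter_subset_right),
      upperPer n (by omega)⟩
  · refine CMSAux.tendsto_log_Zfn P c₁ c₀ hc₁ hc₀0 _ ?_
    filter_upwards [eventually_ge_atTop (N + 1)] with n hn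
    exact ⟨(lower n hn).2,
      le_trans (CMSAux.Zfn_mono _ _ _ Set.inter_subset_right) (upperPre n)⟩
  · refine CMSAux.tendsto_log_Zfn P c₁ c₀ hc₁ hc₀0 _ ?_
    filter_upwards [eventually_ge_atTop (N + 1)] with n hn
    exact ⟨le_trans (lower n hn).2 (CMSAux.Zfn_mono _ _ _ Set.inter_subset_right),
      upperPre n⟩
end
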